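/- Let S be a discrete semigroup. Then S is weakly cancellative (all left and right translation maps s ↦ st and s ↦ ts are finite-to-one) if and only if c_0(S) is a submodule of ℓ^∞(S) = ℓ^1(S)^* under the canonical ℓ^1(S)-bimodule actions. -/
import Mathlib


open Filter

lemma aux_tendsto_cofinite {S : Type*} (g : S → S)
    (h : ∀ t : S, {r : S | g r = t}.Finite) : Tendsto g cofinite cofinite := by
  intro A hA
  rw [mem_map, mem_cofinite] at *
  have : (g ⁻¹' A)ᶜ = g ⁻¹' Aᶜ := by ext x; simp
  rw [this]
  have : g ⁻¹' Aᶜ = ⋃ t ∈ Aᶜ, {r : S | g r = t} := by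
    ext x; simp [eq_comm]
  rw [this]
  exact hA.biUnion fun t _ => h t

/-- A discrete semigroup `S` is weakly cancellative (all translation maps are finite-to-one)
if and only if `c₀(S)` (the functions vanishing at infinity, i.e. along the cofinite filter)
is a submodule of `ℓ^∞(S) = ℓ^1(S)^*` for the canonical `ℓ^1(S)`-bimodule actions, i.e.
`c₀(S)` is stable under both translation actions `f ↦ (t ↦ f (t s))` and `f ↦ (t ↦ f (s t))`. -/
theorem weakly_cancellative_iff_c0_submodule {S : Type*} [Semigroup S] :
    (∀ s t : S, {r : S | r * s = t}.Finite ∧ {r : S | s * r = t}.Finite) ↔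
      (∀ f : S → ℂ, Tendsto f cofinite (nhds 0) →
        ∀ s : S, Tendsto (fun t => f (t * s)) cofinite (nhds 0) ∧
          Tendsto (fun t => f (s * t)) cofinite (nhds 0)) := by
  constructor
  · intro h f hf s
    constructor
    · exact hf.comp (aux_tendsto_cofinite (fun r => r * s) (fun t => (h s t).1))
    · exact hf.comp (aux_tendsto_cofinite (fun r => s * r) (fun t => (h s t).2))
  · intro h s t
    set f : S → ℂ := Set.indicator {t} 1 with hfdef
    have hf : Tendsto f cofinite (nhds 0) := by
      apply Tendsto.congr' (f₁ := fun _ => (0 : ℂ))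
      · filter_upwards [(Set.finite_singleton t).compl_mem_cofinite] with x hx
        simp [hfdef, Set.indicator_of_notMem hx]
      · exact tendsto_const_nhds
    obtain ⟨h1, h2⟩ := h f hf s
    constructor
    · have := h1 (Metric.ball_mem_nhds (0 : ℂ) one_pos)
      rw [mem_map, mem_cofinite] at this
      refine this.subset ?_
      intro r hr
      simp only [Set.mem_setOf_eq] at hr
      simp [Set.mem_preimage, hfdef, hr, Metric.mem_ball]
    · have := h2 (Metric.ball_mem_nhds (0 : ℂ) one_pos)
      rw [mem_map, mem_cofinite] at this
      refine this.subset ?_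
      intro r hr
      simp only [Set.mem_setOf_eq] at hr
      simp [Set.mem_preimage, hfdef, hr, Metric.mem_ball]
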